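/- Let M be a connected smooth manifold without boundary and let x₀, x₁ ∈ M. Then there exists a diffeomorphism ψ : M → M with compact support such that ψ(x₀) = x₁. -/

import Mathlib

open Function Set
open scoped Manifold

noncomputable section

/-- `ψ` is a diffeomorphism of the manifold `M` with compact support: it is smooth, has a
smooth two-sided inverse, and the closure of `{x : ψ x ≠ x}` is compact. -/
def IsCSDiffeoM (n : ℕ) {M : Type*} [TopologicalSpace M]
    [ChartedSpace (EuclideanSpace ℝ (Fin n)) M] [IsManifold (𝓡 n) (⊤ : ℕ∞) M]
    (ψ : M → M) : Prop :=
  ContMDiff (𝓡 n) (𝓡 n) (⊤ : ℕ∞) ψ ∧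
  (∃ ψinv : M → M, ContMDiff (𝓡 n) (𝓡 n) (⊤ : ℕ∞) ψinv ∧
    Function.LeftInverse ψinv ψ ∧ Function.RightInverse ψinv ψ) ∧
  IsCompact (closure {x : M | ψ x ≠ x})

section Aux

/-- In Euclidean space, points at distance `< ε` from `c` can be reached from `c` by a smooth
diffeomorphism which is the identity outside `ball c r`. -/
theorem euclid_move {E : Type*} [NormedAddCommGroup E] [NormedSpace ℝ E] [HasContDiffBump E]
    [FiniteDimensional ℝ E] (c : E) (r : ℝ) (hr : 0 < r) :
    ∃ ε > 0, ∀ v : E, ‖v‖ < ε →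
      ∃ ψ ψinv : E → E,
        ContDiff ℝ (⊤ : ℕ∞) ψ ∧ ContDiff ℝ (⊤ : ℕ∞) ψinv ∧ Function.LeftInverse ψinv ψ ∧
        Function.RightInverse ψinv ψ ∧ (∀ x, x ∉ Metric.ball c r → ψ x = x) ∧ ψ c = c + v := by
  have hle : ((⊤ : ℕ∞) : WithTop ℕ∞) ≠ 0 := by simp
  set bump : ContDiffBump c := ⟨r / 2, r, by positivity, by linarith⟩ with hbump
  set f : E → ℝ := fun x => bump x with hf
  have hfc : ContDiff ℝ (⊤ : ℕ∞) f := bump.contDiff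
  have hsupp : HasCompactSupport f := bump.hasCompactSupport
  obtain ⟨K, hK⟩ := hfc.lipschitzWith_of_hasCompactSupport hsupp hle
  refine ⟨((K : ℝ) + 1)⁻¹, by positivity, fun v hv => ?_⟩
  have hδ1 : ((K : ℝ) + 1) * ‖v‖ < 1 := by
    have hK1 : (0:ℝ) < (K : ℝ) + 1 := by positivity
    calc ((K : ℝ) + 1) * ‖v‖ < ((K : ℝ) + 1) * ((K : ℝ) + 1)⁻¹ := by
          rcases eq_or_lt_of_le (norm_nonneg v) with h | h
          · rw [← h]; simpa using by positivity
          · exact (mul_lt_mul_iff_right₀ hK1).2 hv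
      _ = 1 := mul_inv_cancel₀ hK1.ne'
  have hδ : (K : ℝ) * ‖v‖ < 1 :=
    lt_of_le_of_lt (mul_le_mul_of_nonneg_right (by linarith) (norm_nonneg v)) hδ1
  set ψ : E → E := fun x => x + f x • v with hψdef
  -- basic Lipschitz-type estimate
  have hest : ∀ x y : E, ‖f x • v - f y • v‖ ≤ (K : ℝ) * ‖v‖ * ‖x - y‖ := by
    intro x y
    rw [← sub_smul, norm_smul, Real.norm_eq_abs]
    have h1 : |f x - f y| ≤ (K : ℝ) * ‖x - y‖ := by
      have := hK.dist_le_mul x y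
      rwa [Real.dist_eq, dist_eq_norm] at this
    calc |f x - f y| * ‖v‖ ≤ ((K : ℝ) * ‖x - y‖) * ‖v‖ :=
          mul_le_mul_of_nonneg_right h1 (norm_nonneg v)
      _ = (K : ℝ) * ‖v‖ * ‖x - y‖ := by ring
  have hinj : Function.Injective ψ := by
    intro a b hab
    have h1 : a - b = f b • v - f a • v := by
      have hthis : a + f a • v = b + f b • v := hab
      rw [sub_eq_sub_iff_add_eq_add, hthis]
      abel
    by_contra hne
    have h2 : ‖a - b‖ ≤ (K : ℝ) * ‖v‖ * ‖a - b‖ := by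
      calc ‖a - b‖ = ‖f b • v - f a • v‖ := congrArg norm h1
        _ ≤ (K : ℝ) * ‖v‖ * ‖b - a‖ := hest b a
        _ = (K : ℝ) * ‖v‖ * ‖a - b‖ := by rw [norm_sub_rev]
    have h3 : 0 < ‖a - b‖ := by
      rw [norm_pos_iff]; exact sub_ne_zero_of_ne hne
    nlinarith
  have hsurj : Function.Surjective ψ := by
    intro y
    set g : E → E := fun x => y - f x • v with hg
    have hlip : LipschitzWith (K * ‖v‖₊) g := by
      apply LipschitzWith.of_dist_le_mul
      intro x x'
      rw [dist_eq_norm, dist_eq_norm]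
      have hgg : g x - g x' = f x' • v - f x • v := by
        simp only [hg]
        abel
      rw [hgg]
      calc ‖f x' • v - f x • v‖ ≤ (K : ℝ) * ‖v‖ * ‖x' - x‖ := hest x' x
        _ = ↑(K * ‖v‖₊) * ‖x - x'‖ := by
            push_cast [coe_nnnorm]
            rw [norm_sub_rev]
    have hcontr : ContractingWith (K * ‖v‖₊) g := by
      constructor
      · rw [← NNReal.coe_lt_one]
        push_cast [coe_nnnorm]
        exact hδ
      · exact hlip
    refine ⟨hcontr.fixedPoint g, ?_⟩
    have hfix : y - f (hcontr.fixedPoint g) • v = hcontr.fixedPoint g :=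
      hcontr.fixedPoint_isFixedPt
    show hcontr.fixedPoint g + f (hcontr.fixedPoint g) • v = y
    rw [eq_sub_iff_add_eq.mp hfix.symm]
  set eqv : E ≃ E := Equiv.ofBijective ψ ⟨hinj, hsurj⟩ with heqv
  have happ : ∀ x, eqv x = ψ x := fun x => rfl
  have hψsm : ContDiff ℝ (⊤ : ℕ∞) ψ := contDiff_id.add (hfc.smul contDiff_const)
  have hinvsm : ContDiff ℝ (⊤ : ℕ∞) (eqv.symm : E → E) := by
    rw [contDiff_iff_contDiffAt]
    intro y
    set a : E := eqv.symm y with ha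
    have hay : ψ a = y := eqv.apply_symm_apply y
    have hdiff : DifferentiableAt ℝ f a := (hfc.differentiable hle).differentiableAt
    set B : E →L[ℝ] E := (fderiv ℝ f a).smulRight v with hB
    have hBnorm : ‖B‖ < 1 := by
      rw [hB, ContinuousLinearMap.norm_smulRight_apply]
      calc ‖fderiv ℝ f a‖ * ‖v‖ ≤ (K : ℝ) * ‖v‖ :=
            mul_le_mul_of_nonneg_right (norm_fderiv_le_of_lipschitz ℝ hK) (norm_nonneg v)
        _ < 1 := hδ
    set u : (E →L[ℝ] E)ˣ := Units.oneSub (-B) (by rwa [norm_neg]) with hu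
    set A : E ≃L[ℝ] E := ContinuousLinearEquiv.unitsEquiv ℝ E u with hA
    have hAcoe : (A : E →L[ℝ] E) = ContinuousLinearMap.id ℝ E + B := by
      refine ContinuousLinearMap.ext fun x => ?_
      show (u : E →L[ℝ] E) x = _
      rw [hu, Units.val_oneSub, sub_neg_eq_add]
      rfl
    have hder : HasFDerivAt ψ (A : E →L[ℝ] E) a := by
      rw [hAcoe]
      exact (hasFDerivAt_id a).add (hdiff.hasFDerivAt.smul_const v)
    have hca : ContDiffAt ℝ (⊤ : ℕ∞) ψ a := hψsm.contDiffAt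
    have hinvC : ContDiffAt ℝ (⊤ : ℕ∞) (hca.localInverse hder hle) (ψ a) :=
      hca.to_localInverse hder hle
    have hev : ∀ᶠ z in nhds (ψ a), ψ (hca.localInverse hder hle z) = z :=
      (hca.hasStrictFDerivAt' hder hle).eventually_right_inverse
    have heq : (eqv.symm : E → E) =ᶠ[nhds (ψ a)] hca.localInverse hder hle := by
      filter_upwards [hev] with z hz
      apply hinj
      rw [hz]
      exact eqv.apply_symm_apply z
    rw [← hay]
    exact hinvC.congr_of_eventuallyEq heq
  refine ⟨ψ, eqv.symm, hψsm, hinvsm, fun x => eqv.symm_apply_apply x,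
    fun x => eqv.apply_symm_apply x, fun x hx => ?_, ?_⟩
  · have hfx : f x = 0 := by
      apply bump.zero_of_le_dist
      show r ≤ dist x c
      simpa [Metric.mem_ball, not_lt] using hx
    simp [hψdef, hfx]
  · have hfc1 : f c = 1 := bump.one_of_mem_closedBall (by simp [hbump]; positivity)
    simp [hψdef, hfc1]
variable {n : ℕ} {M : Type*} [TopologicalSpace M] [T2Space M]
    [ChartedSpace (EuclideanSpace ℝ (Fin n)) M] [IsManifold (𝓡 n) (⊤ : ℕ∞) M]

/-- Transfer a compactly supported diffeomorphism of Euclidean space, supported inside (the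
target of) a chart, to the manifold. -/
theorem transfer_move (p : M) (c : EuclideanSpace ℝ (Fin n)) (r : ℝ)
    (hball : Metric.closedBall c r ⊆ (chartAt (EuclideanSpace ℝ (Fin n)) p).target)
    (ψE ψEinv : EuclideanSpace ℝ (Fin n) → EuclideanSpace ℝ (Fin n))
    (h1 : ContDiff ℝ (⊤ : ℕ∞) ψE) (h2 : ContDiff ℝ (⊤ : ℕ∞) ψEinv)
    (h3 : Function.LeftInverse ψEinv ψE) (h4 : Function.RightInverse ψEinv ψE)
    (h5 : ∀ x, x ∉ Metric.ball c r → ψE x = x) :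
    ∃ ψ : M → M, IsCSDiffeoM n ψ ∧
      ∀ y ∈ (chartAt (EuclideanSpace ℝ (Fin n)) p).source,
        ψ y = (chartAt (EuclideanSpace ℝ (Fin n)) p).symm
          (ψE (chartAt (EuclideanSpace ℝ (Fin n)) p y)) := by
  classical
  set e := chartAt (EuclideanSpace ℝ (Fin n)) p with he
  have h5' : ∀ x, x ∉ Metric.ball c r → ψEinv x = x := by
    intro x hx
    conv_lhs => rw [← h5 x hx]
    exact h3 x
  -- the lift of a Euclidean map to the manifold
  set lift : (EuclideanSpace ℝ (Fin n) → EuclideanSpace ℝ (Fin n)) → M → M :=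
    fun φ y => if y ∈ e.source then e.symm (φ (e y)) else y with hlift
  -- stability of the chart target
  have key : ∀ (φ : EuclideanSpace ℝ (Fin n) → EuclideanSpace ℝ (Fin n)), Function.Injective φ →
      (∀ x, x ∉ Metric.ball c r → φ x = x) → ∀ z ∈ e.target, φ z ∈ e.target := by
    intro φ hinj hφ z hz
    by_cases h : φ z ∈ Metric.ball c r
    · exact hball (Metric.ball_subset_closedBall h)
    · have h' : φ (φ z) = φ z := hφ _ h
      have : φ z = z := hinj h'
      rwa [this]
  have hinjE : Function.Injective ψE := h3.injective
  have hinjEinv : Function.Injective ψEinv := h4.injective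
  -- the two lifts are inverse to each other
  have hinv_pair : ∀ (φ φ' : EuclideanSpace ℝ (Fin n) → EuclideanSpace ℝ (Fin n)),
      Function.Injective φ → Function.LeftInverse φ' φ →
      (∀ x, x ∉ Metric.ball c r → φ x = x) →
      Function.LeftInverse (lift φ') (lift φ) := by
    intro φ φ' hinj hli hid y
    by_cases hy : y ∈ e.source
    · have h7 : φ (e y) ∈ e.target := key φ hinj hid _ (e.map_source hy)
      simp only [hlift]
      rw [if_pos hy, if_pos (e.map_target h7), e.right_inv h7, hli, e.left_inv hy]
    · simp only [hlift]
      rw [if_neg hy, if_neg hy]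
  -- smoothness of lifts
  have hsmooth : ∀ (φ : EuclideanSpace ℝ (Fin n) → EuclideanSpace ℝ (Fin n)),
      ContDiff ℝ (⊤ : ℕ∞) φ → Function.Injective φ →
      (∀ x, x ∉ Metric.ball c r → φ x = x) → ContMDiff (𝓡 n) (𝓡 n) (⊤ : ℕ∞) (lift φ) := by
    intro φ hφsm hinj hid
    -- the compact "support" set
    set K : Set M := e.symm '' Metric.closedBall c r with hKdef
    have hKcompact : IsCompact K :=
      (isCompact_closedBall c r).image_of_continuousOn (e.continuousOn_symm.mono hball)
    have hKclosed : IsClosed K := hKcompact.isClosed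
    have hKsub : K ⊆ e.source := by
      rintro _ ⟨z, hz, rfl⟩
      exact e.map_target (hball hz)
    have hid_out : ∀ y ∉ K, lift φ y = y := by
      intro y hyK
      by_cases hy : y ∈ e.source
      · simp only [hlift]
        rw [if_pos hy]
        by_cases hb : e y ∈ Metric.ball c r
        · exact absurd ⟨e y, Metric.ball_subset_closedBall hb, e.left_inv hy⟩ hyK
        · rw [hid _ hb, e.left_inv hy]
      · simp only [hlift]
        rw [if_neg hy]
    apply contMDiff_of_locally_contMDiffOn
    intro y
    by_cases hy : y ∈ e.source
    · refine ⟨e.source, e.open_source, hy, ?_⟩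
      have hchart : ContMDiffOn (𝓡 n) (𝓡 n) (⊤ : ℕ∞) e e.source := contMDiffOn_chart
      have hchart' : ContMDiffOn (𝓡 n) (𝓡 n) (⊤ : ℕ∞) e.symm e.target := contMDiffOn_chart_symm
      have hφm : ContMDiff (𝓡 n) (𝓡 n) (⊤ : ℕ∞) φ := hφsm.contMDiff
      have hcomp : ContMDiffOn (𝓡 n) (𝓡 n) (⊤ : ℕ∞) (e.symm ∘ φ ∘ e) e.source :=
        hchart'.comp (hφm.comp_contMDiffOn hchart)
          (fun x hx => key φ hinj hid _ (e.map_source hx))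
      refine hcomp.congr fun z hz => ?_
      simp only [hlift]
      rw [if_pos hz]
      rfl
    · refine ⟨Kᶜ, hKclosed.isOpen_compl, fun hK => hy (hKsub hK), ?_⟩
      exact (contMDiff_id.contMDiffOn).congr fun z hz => hid_out z hz
  -- compact support
  have hcs : IsCompact (closure {y : M | lift ψE y ≠ y}) := by
    set K : Set M := e.symm '' Metric.closedBall c r with hKdef
    have hKcompact : IsCompact K :=
      (isCompact_closedBall c r).image_of_continuousOn (e.continuousOn_symm.mono hball)
    have hsub : {y : M | lift ψE y ≠ y} ⊆ K := by
      intro y hy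
      by_contra hyK
      apply hy
      by_cases hys : y ∈ e.source
      · show lift ψE y = y
        simp only [hlift]
        rw [if_pos hys]
        by_cases hb : e y ∈ Metric.ball c r
        · exact absurd ⟨e y, Metric.ball_subset_closedBall hb, e.left_inv hys⟩ hyK
        · rw [h5 _ hb, e.left_inv hys]
      · show lift ψE y = y
        simp only [hlift]
        rw [if_neg hys]
    exact hKcompact.of_isClosed_subset isClosed_closure
      (closure_minimal hsub hKcompact.isClosed)
  refine ⟨lift ψE, ⟨hsmooth ψE h1 hinjE h5, ⟨lift ψEinv, hsmooth ψEinv h2 hinjEinv h5',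
    hinv_pair ψE ψEinv hinjE h3 h5, hinv_pair ψEinv ψE hinjEinv h4 h5'⟩, hcs⟩,
    fun y hy => by simp only [hlift]; rw [if_pos hy]⟩

/-- Every point has a neighbourhood whose points can all be reached from it by compactly
supported diffeomorphisms. -/
theorem local_move (y : M) :
    ∃ u : Set M, IsOpen u ∧ y ∈ u ∧
      ∀ z ∈ u, ∃ ψ : M → M, IsCSDiffeoM n ψ ∧ ψ y = z := by
  set e := chartAt (EuclideanSpace ℝ (Fin n)) y with he
  have hy : y ∈ e.source := mem_chart_source _ y
  set c := e y with hc
  have hct : c ∈ e.target := e.map_source hy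
  obtain ⟨r, hr, hrsub⟩ : ∃ r > 0, Metric.closedBall c r ⊆ e.target :=
    (Metric.nhds_basis_closedBall.mem_iff).mp (e.open_target.mem_nhds hct)
  obtain ⟨ε, hε, hmove⟩ := euclid_move c r hr
  refine ⟨e.source ∩ e ⁻¹' Metric.ball c ε, e.isOpen_inter_preimage Metric.isOpen_ball,
    ⟨hy, by simpa [Metric.mem_ball, hc] using hε⟩, ?_⟩
  rintro z ⟨hz, hz'⟩
  have hvn : ‖e z - c‖ < ε := by rwa [← mem_ball_iff_norm]
  obtain ⟨ψE, ψEinv, h1, h2, h3, h4, h5, h6⟩ := hmove (e z - c) hvn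
  obtain ⟨ψ, hψ, hval⟩ := transfer_move y c r hrsub ψE ψEinv h1 h2 h3 h4 h5
  refine ⟨ψ, hψ, ?_⟩
  rw [hval y hy, ← hc, h6, add_sub_cancel]
  exact e.left_inv hz

theorem cs_id : IsCSDiffeoM n (id : M → M) := by
  refine ⟨contMDiff_id, ⟨id, contMDiff_id, fun x => rfl, fun x => rfl⟩, ?_⟩
  have : {x : M | id x ≠ x} = ∅ := by simp
  rw [this, closure_empty]
  exact isCompact_empty

theorem cs_comp {ψ φ : M → M} (hψ : IsCSDiffeoM n ψ) (hφ : IsCSDiffeoM n φ) :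
    IsCSDiffeoM n (ψ ∘ φ) := by
  obtain ⟨hψs, ⟨ψi, hψis, hψl, hψr⟩, hψc⟩ := hψ
  obtain ⟨hφs, ⟨φi, hφis, hφl, hφr⟩, hφc⟩ := hφ
  refine ⟨hψs.comp hφs, ⟨φi ∘ ψi, hφis.comp hψis, ?_, ?_⟩, ?_⟩
  · intro x
    show φi (ψi (ψ (φ x))) = x
    rw [hψl, hφl]
  · intro x
    show ψ (φ (φi (ψi x))) = x
    rw [hφr, hψr]
  · have hsub : {x : M | (ψ ∘ φ) x ≠ x} ⊆ {x : M | φ x ≠ x} ∪ {x : M | ψ x ≠ x} := by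
      intro x hx
      by_cases h : φ x = x
      · exact Or.inr fun hne => hx (show (ψ ∘ φ) x = x by simp [Function.comp, h, hne])
      · exact Or.inl h
    have : closure {x : M | (ψ ∘ φ) x ≠ x} ⊆
        closure {x : M | φ x ≠ x} ∪ closure {x : M | ψ x ≠ x} := by
      refine (closure_mono hsub).trans ?_
      rw [closure_union]
    exact (hφc.union hψc).of_isClosed_subset isClosed_closure this

theorem cs_symm {ψ : M → M} (hψ : IsCSDiffeoM n ψ) :
    ∃ ψinv : M → M, IsCSDiffeoM n ψinv ∧ Function.LeftInverse ψinv ψ ∧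
      Function.RightInverse ψinv ψ := by
  obtain ⟨hψs, ⟨ψi, hψis, hψl, hψr⟩, hψc⟩ := hψ
  refine ⟨ψi, ⟨hψis, ⟨ψ, hψs, hψr, hψl⟩, ?_⟩, hψl, hψr⟩
  have hsub : {x : M | ψi x ≠ x} ⊆ {x : M | ψ x ≠ x} := by
    intro x hx
    by_contra h
    apply hx
    show ψi x = x
    have hxx : ψ x = x := not_not.mp h
    conv_lhs => rw [← hxx]
    exact hψl x
  exact hψc.of_isClosed_subset isClosed_closure (closure_mono hsub)

end Aux

/-- In a connected smooth manifold without boundary, any point can be taken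
to any other point by a diffeomorphism with compact support. -/
theorem statement9 (n : ℕ) {M : Type*} [TopologicalSpace M] [T2Space M]
    [ChartedSpace (EuclideanSpace ℝ (Fin n)) M] [IsManifold (𝓡 n) (⊤ : ℕ∞) M]
    [ConnectedSpace M] (x₀ x₁ : M) :
    ∃ ψ : M → M, IsCSDiffeoM n ψ ∧ ψ x₀ = x₁ := by
  set S : Set M := {y : M | ∃ ψ : M → M, IsCSDiffeoM n ψ ∧ ψ x₀ = y} with hS
  have hx₀ : x₀ ∈ S := ⟨id, cs_id (n := n), rfl⟩
  have hopen : IsOpen S := by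
    rw [isOpen_iff_mem_nhds]
    rintro y ⟨ψ₀, hψ₀, hψ₀y⟩
    obtain ⟨u, huo, hyu, hu⟩ := local_move (n := n) y
    refine Filter.mem_of_superset (huo.mem_nhds hyu) ?_
    intro z hz
    obtain ⟨φ, hφ, hφy⟩ := hu z hz
    exact ⟨φ ∘ ψ₀, cs_comp hφ hψ₀, by simp [hψ₀y, hφy]⟩
  have hclosed : IsClosed S := by
    rw [← isOpen_compl_iff, isOpen_iff_mem_nhds]
    intro y hy
    obtain ⟨u, huo, hyu, hu⟩ := local_move (n := n) y
    refine Filter.mem_of_superset (huo.mem_nhds hyu) ?_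
    intro z hz hzS
    apply hy
    obtain ⟨ψz, hψz, hψzx⟩ := hzS
    obtain ⟨φ, hφ, hφy⟩ := hu z hz
    obtain ⟨φi, hφi, hφl, hφr⟩ := cs_symm hφ
    refine ⟨φi ∘ ψz, cs_comp hφi hψz, ?_⟩
    show φi (ψz x₀) = y
    rw [hψzx, ← hφy, hφl]
  have : S = univ := IsClopen.eq_univ ⟨hclosed, hopen⟩ ⟨x₀, hx₀⟩
  have hx₁ : x₁ ∈ S := this ▸ mem_univ x₁
  exact hx₁

end
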